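/- Let (G,γ) be a Z/3Z-colored graph and let G̃ be its development. If G̃ is Laman-sparse (i.e., (2,3)-sparse), then (G,γ) is cone-Laman-sparse. -/

import Mathlib

/-- A finite directed multigraph: each edge has a tail and a head vertex. -/
structure Multigraph (V : Type) (E : Type) where
  tail : E → V
  head : E → V

namespace Multigraph

variable {V E Γ : Type}

/-- The starting vertex of a step `(e, b)`: the edge `e` traversed forwards if `b = true`,
backwards otherwise. -/
def stepSrc (G : Multigraph V E) (s : E × Bool) : V :=
  if s.2 then G.tail s.1 else G.head s.1

/-- The ending vertex of a step `(e, b)`. -/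
def stepDst (G : Multigraph V E) (s : E × Bool) : V :=
  if s.2 then G.head s.1 else G.tail s.1

/-- `G.WalkFrom u v w`: the list of steps `w` is a walk from `u` to `v`
(edge orientations ignored: each step records an edge and a traversal direction). -/
inductive WalkFrom (G : Multigraph V E) : V → V → List (E × Bool) → Prop
  | nil (v : V) : WalkFrom G v v []
  | cons {v : V} (s : E × Bool) {rest : List (E × Bool)} :
      WalkFrom G (G.stepDst s) v rest → WalkFrom G (G.stepSrc s) v (s :: rest)

/-- `ρ` of a walk: the sum of the colors of forward-traversed edges minus
the sum of the colors of backward-traversed edges. -/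
def rho [AddCommGroup Γ] (γ : E → Γ) (w : List (E × Bool)) : Γ :=
  (w.map fun s => if s.2 then γ s.1 else -γ s.1).sum

/-- A cycle contained in the subgraph with edge set `S`: a nonempty closed walk,
with no repeated edges and no repeated vertices. -/
def IsCycleIn (G : Multigraph V E) (S : Finset E) (w : List (E × Bool)) : Prop :=
  (∃ v, G.WalkFrom v v w) ∧ w ≠ [] ∧ (∀ s ∈ w, s.1 ∈ S) ∧
    (w.map Prod.fst).Nodup ∧ (w.map G.stepSrc).Nodup

/-- The subgraph with edge set `S` has trivial `Γ`-image: `ρ(C) = 0` for every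
cycle `C` contained in it. -/
def TrivialImage [AddCommGroup Γ] (G : Multigraph V E) (γ : E → Γ) (S : Finset E) : Prop :=
  ∀ w, G.IsCycleIn S w → rho γ w = 0

/-- The vertices spanned by an edge set. -/
def verts [DecidableEq V] (G : Multigraph V E) (S : Finset E) : Finset V :=
  S.image G.tail ∪ S.image G.head

/-- The edge set `S` is `(k, ℓ)`-sparse: every nonempty subgraph with `n'` vertices and
`m'` edges satisfies `m' ≤ k n' - ℓ`. -/
def Sparse [DecidableEq V] (G : Multigraph V E) (k ℓ : ℤ) (S : Finset E) : Prop :=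
  ∀ S' ⊆ S, S'.Nonempty → (S'.card : ℤ) ≤ k * ((G.verts S').card : ℤ) - ℓ

/-- The edge set `S` is a `(k, ℓ)`-graph (as a subgraph on its spanned vertices):
it is `(k, ℓ)`-sparse and has exactly `k n - ℓ` edges. -/
def Tight [DecidableEq V] (G : Multigraph V E) (k ℓ : ℤ) (S : Finset E) : Prop :=
  G.Sparse k ℓ S ∧ (S.card : ℤ) = k * ((G.verts S).card : ℤ) - ℓ

/-- The edge set `S` is a `(k, ℓ)`-circuit: edge-minimal not `(k, ℓ)`-sparse. -/
def Circuit [DecidableEq V] [DecidableEq E] (G : Multigraph V E) (k ℓ : ℤ) (S : Finset E) :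
    Prop :=
  ¬ G.Sparse k ℓ S ∧ ∀ e ∈ S, G.Sparse k ℓ (S.erase e)

/-- A `(k, ℓ)`-basis of `G`: a maximal `(k, ℓ)`-sparse edge set. -/
def Basis [DecidableEq V] (G : Multigraph V E) (k ℓ : ℤ) (L : Finset E) : Prop :=
  G.Sparse k ℓ L ∧ ∀ L', L ⊆ L' → G.Sparse k ℓ L' → L' = L

/-- `C` is the fundamental `(k, ℓ)`-circuit of some edge `e ∉ L` with respect to the
`(k, ℓ)`-basis `L`: a `(k, ℓ)`-circuit contained in `L + e`. -/
def FundCircuit [DecidableEq V] [DecidableEq E] (G : Multigraph V E) (k ℓ : ℤ)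
    (L C : Finset E) : Prop :=
  G.Circuit k ℓ C ∧ ∃ e, e ∉ L ∧ C ⊆ insert e L

/-- The whole graph `G` is a `(k, ℓ)`-graph: `(k, ℓ)`-sparse, with exactly
`k n - ℓ` edges where `n` is the number of vertices of `G`. -/
def IsKLGraph [DecidableEq V] [Fintype V] [Fintype E] (G : Multigraph V E) (k ℓ : ℤ) : Prop :=
  G.Sparse k ℓ Finset.univ ∧ (Fintype.card E : ℤ) = k * (Fintype.card V : ℤ) - ℓ

/-- The colored subgraph with edge set `S` is Ross-sparse: nonempty subgraphs with trivial
`Γ`-image satisfy `m' ≤ 2n' - 3`, and those with non-trivial image satisfy `m' ≤ 2n' - 2`. -/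
def RossSparseOn [DecidableEq V] [AddCommGroup Γ] (G : Multigraph V E) (γ : E → Γ)
    (S : Finset E) : Prop :=
  ∀ S' ⊆ S, S'.Nonempty →
    (G.TrivialImage γ S' → (S'.card : ℤ) ≤ 2 * ((G.verts S').card : ℤ) - 3) ∧
    (¬ G.TrivialImage γ S' → (S'.card : ℤ) ≤ 2 * ((G.verts S').card : ℤ) - 2)

/-- The colored subgraph with edge set `S` is a Ross graph (on its spanned vertices):
Ross-sparse with exactly `2n - 2` edges. -/
def RossGraphOn [DecidableEq V] [AddCommGroup Γ] (G : Multigraph V E) (γ : E → Γ)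
    (S : Finset E) : Prop :=
  G.RossSparseOn γ S ∧ (S.card : ℤ) = 2 * ((G.verts S).card : ℤ) - 2

/-- The whole colored graph `(G, γ)` is a Ross graph: Ross-sparse with exactly `2n - 2`
edges, `n` being the number of vertices of `G`. -/
def RossGraph [DecidableEq V] [Fintype V] [Fintype E] [AddCommGroup Γ] (G : Multigraph V E)
    (γ : E → Γ) : Prop :=
  G.RossSparseOn γ Finset.univ ∧ (Fintype.card E : ℤ) = 2 * (Fintype.card V : ℤ) - 2

/-- The colored graph `(G, γ)` is cone-Laman-sparse: nonempty subgraphs with trivial image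
satisfy `m' ≤ 2n' - 3`, those with non-trivial image satisfy `m' ≤ 2n' - 1`. -/
def ConeLamanSparse [DecidableEq V] [AddCommGroup Γ] (G : Multigraph V E) (γ : E → Γ) : Prop :=
  ∀ S' : Finset E, S'.Nonempty →
    (G.TrivialImage γ S' → (S'.card : ℤ) ≤ 2 * ((G.verts S').card : ℤ) - 3) ∧
    (¬ G.TrivialImage γ S' → (S'.card : ℤ) ≤ 2 * ((G.verts S').card : ℤ) - 1)

/-- The whole colored graph `(G, γ)` is a cone-Laman graph: cone-Laman-sparse with exactly
`2n - 1` edges, `n` being the number of vertices of `G`. -/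
def ConeLamanGraph [DecidableEq V] [Fintype V] [Fintype E] [AddCommGroup Γ]
    (G : Multigraph V E) (γ : E → Γ) : Prop :=
  G.ConeLamanSparse γ ∧ (Fintype.card E : ℤ) = 2 * (Fintype.card V : ℤ) - 1

/-- A (simple) path from `u` to `v` using only edges in `S`: a walk visiting no vertex
twice. -/
def IsPathIn (G : Multigraph V E) (S : Finset E) (u v : V) (w : List (E × Bool)) : Prop :=
  G.WalkFrom u v w ∧ (∀ s ∈ w, s.1 ∈ S) ∧ (u :: w.map G.stepDst).Nodup

/-- `G` is connected. -/
def Connected (G : Multigraph V E) : Prop :=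
  ∀ u v : V, ∃ w : List (E × Bool), G.WalkFrom u v w

/-- `T` is a spanning tree of `G`: every pair of vertices is joined by a path in `T`,
and `T` contains no cycle. -/
def IsSpanningTree (G : Multigraph V E) (T : Finset E) : Prop :=
  (∀ u v : V, ∃ w, G.IsPathIn T u v w) ∧ ∀ w, ¬ G.IsCycleIn T w

/-- `T` is a spanning forest of `G`: a maximal acyclic edge set. -/
def IsSpanningForest (G : Multigraph V E) (T : Finset E) : Prop :=
  (∀ w, ¬ G.IsCycleIn T w) ∧
    ∀ T', T ⊆ T' → (∀ w, ¬ G.IsCycleIn T' w) → T' = T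

/-- In the tree `T` rooted at `r`, vertex `x` lies on the (unique) path from the root `r`
to `y`; i.e. `x` is an ancestor of `y`. -/
def Anc (G : Multigraph V E) (T : Finset E) (r x y : V) : Prop :=
  ∀ w, G.IsPathIn T r y w → x ∈ (r :: w.map G.stepDst)

/-- `a` is the least common ancestor of `i` and `j` in the tree `T` rooted at `r`:
the vertex where the paths from `i` to `r` and from `j` to `r` first converge. -/
def IsLCA (G : Multigraph V E) (T : Finset E) (r a i j : V) : Prop :=
  G.Anc T r a i ∧ G.Anc T r a j ∧ ∀ x, G.Anc T r x i → G.Anc T r x j → G.Anc T r x a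

/-- The development of a `ℤ/3ℤ`-colored graph: vertices `i_z`, and for each edge `ij`
with color `γ_ij` the three edges `i_z j_{z + γ_ij}`. -/
def Development (G : Multigraph V E) (γ : E → ZMod 3) :
    Multigraph (V × ZMod 3) (E × ZMod 3) where
  tail s := (G.tail s.1, s.2)
  head s := (G.head s.1, s.2 + γ s.1)

/-- The lift `π⁻¹(S)` in the development of the subgraph with edge set `S`. -/
def lift [DecidableEq E] (S : Finset E) : Finset (E × ZMod 3) :=
  S ×ˢ (Finset.univ : Finset (ZMod 3))

/-- The map `α_z : i_w ↦ i_{w+z}` on the vertices of the development. -/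
def devShift (z : ZMod 3) : V × ZMod 3 → V × ZMod 3 :=
  fun p => (p.1, p.2 + z)

/-- The map `α_z` on the edges of the development. -/
def devShiftE (z : ZMod 3) : E × ZMod 3 → E × ZMod 3 :=
  fun s => (s.1, s.2 + z)

/-- Two vertices of a multigraph are adjacent if some edge joins them (in either
direction). -/
def Adj (G : Multigraph V E) (u v : V) : Prop :=
  ∃ e, (G.tail e = u ∧ G.head e = v) ∨ (G.tail e = v ∧ G.head e = u)

section AuxLemmas

variable {G : Multigraph V E}


variable {G : Multigraph V E}

lemma walk_append {u v t : V} {w1 w2 : List (E × Bool)}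
    (h1 : G.WalkFrom u v w1) (h2 : G.WalkFrom v t w2) : G.WalkFrom u t (w1 ++ w2) := by
  induction h1 with
  | nil => simpa
  | cons s h ih => exact .cons s (ih h2)

lemma walk_cons_true {f : E} {x : V} {w : List (E × Bool)}
    (h : G.WalkFrom (G.head f) x w) : G.WalkFrom (G.tail f) x ((f, true) :: w) := by
  have := WalkFrom.cons (G := G) (f, true) (by simpa [stepDst] using h)
  simpa [stepSrc] using this

lemma walk_cons_false {f : E} {x : V} {w : List (E × Bool)}
    (h : G.WalkFrom (G.tail f) x w) : G.WalkFrom (G.head f) x ((f, false) :: w) := by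
  have := WalkFrom.cons (G := G) (f, false) (by simpa [stepDst] using h)
  simpa [stepSrc] using this

lemma srcs_eq {u v : V} {w : List (E × Bool)} (h : G.WalkFrom u v w) :
    w.map G.stepSrc = (u :: w.map G.stepDst).dropLast := by
  induction h with
  | nil => simp
  | cons s h ih =>
    simp only [List.map_cons]
    rw [List.dropLast_cons₂, ← ih]

lemma path_suffix {S : Finset E} {v u : V} :
    ∀ {p : List (E × Bool)} {a : V}, G.IsPathIn S a v p → u ∈ a :: p.map G.stepDst →
      ∃ q, G.IsPathIn S u v q := by
  intro p
  induction p with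
  | nil =>
    intro a h hm
    simp at hm
    exact ⟨[], hm ▸ h⟩
  | cons s rest ih =>
    intro a h hm
    rcases List.mem_cons.mp hm with rfl | hm'
    · exact ⟨s :: rest, h⟩
    · obtain ⟨hw, hmem, hnd⟩ := h
      cases hw with
      | cons _ hw' =>
        refine ih ⟨hw', fun t ht => hmem t (List.mem_cons_of_mem _ ht), ?_⟩ (by simpa using hm')
        simpa using hnd.of_cons

lemma exists_path {S : Finset E} {u v : V} {w : List (E × Bool)}
    (h : G.WalkFrom u v w) (hm : ∀ s ∈ w, s.1 ∈ S) : ∃ p, G.IsPathIn S u v p := by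
  induction h with
  | nil v => exact ⟨[], .nil v, by simp, by simp⟩
  | cons s h ih =>
    obtain ⟨p, hp⟩ := ih (fun t ht => hm t (List.mem_cons_of_mem _ ht))
    by_cases hu : G.stepSrc s ∈ G.stepDst s :: p.map G.stepDst
    · exact path_suffix hp hu
    · refine ⟨s :: p, .cons s hp.1, ?_, ?_⟩
      · intro t ht
        rcases List.mem_cons.mp ht with rfl | ht'
        · exact hm t List.mem_cons_self
        · exact hp.2.1 t ht'
      · simp only [List.map_cons]
        exact List.nodup_cons.mpr ⟨hu, hp.2.2⟩

lemma path_edges_nodup {S : Finset E} {v : V} :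
    ∀ {p : List (E × Bool)} {u : V}, G.IsPathIn S u v p → (p.map Prod.fst).Nodup := by
  intro p
  induction p with
  | nil => simp
  | cons s rest ih =>
    intro u h
    obtain ⟨hw, hmem, hnd⟩ := h
    cases hw with
    | cons _ hw' =>
      have hrestpath : G.IsPathIn S (G.stepDst s) v rest :=
        ⟨hw', fun t ht => hmem t (List.mem_cons_of_mem _ ht), by simpa using hnd.of_cons⟩
      simp only [List.map_cons, List.nodup_cons]
      refine ⟨?_, ih hrestpath⟩
      intro hmemfst
      obtain ⟨t, ht, ht1⟩ := List.mem_map.mp hmemfst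
      -- u = stepSrc s is not among subsequent vertices
      have hu_notin : G.stepSrc s ∉ G.stepDst s :: rest.map G.stepDst := by
        simpa using (List.nodup_cons.mp hnd).1
      have hsrc_mem : G.stepSrc t ∈ G.stepDst s :: rest.map G.stepDst := by
        have h1 : G.stepSrc t ∈ rest.map G.stepSrc := List.mem_map_of_mem ht
        rw [srcs_eq hw'] at h1
        exact (List.dropLast_sublist _).subset h1
      have hdst_mem : G.stepDst t ∈ rest.map G.stepDst := List.mem_map_of_mem ht
      rcases t with ⟨f, b⟩
      rcases s with ⟨e, c⟩
      simp only at ht1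
      subst ht1
      cases b <;> cases c <;>
        simp_all [stepSrc, stepDst] <;>
        exact hu_notin (List.mem_cons_of_mem _ hdst_mem)

lemma walk_rho [AddCommGroup Γ] {γ : E → Γ} {φ : V → Γ} {S : Finset E}
    (hφ : ∀ f ∈ S, φ (G.head f) = φ (G.tail f) + γ f) {u v : V} {w : List (E × Bool)}
    (h : G.WalkFrom u v w) (hm : ∀ s ∈ w, s.1 ∈ S) : φ v = φ u + rho γ w := by
  induction h with
  | nil => simp [rho]
  | cons s h ih =>
    have hs : s.1 ∈ S := hm s List.mem_cons_self
    have hrest := ih (fun t ht => hm t (List.mem_cons_of_mem _ ht))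
    have hstep : φ (G.stepDst s) = φ (G.stepSrc s) + (if s.2 then γ s.1 else -γ s.1) := by
      rcases s with ⟨f, b⟩
      cases b <;> simp [stepSrc, stepDst, hφ f hs] <;> abel
    rw [hrest, hstep]
    simp [rho]
    abel

lemma exists_potential [AddCommGroup Γ] (γ : E → Γ) (S : Finset E)
    (hS : G.TrivialImage γ S) :
    ∃ φ : V → Γ, ∀ e ∈ S, φ (G.head e) = φ (G.tail e) + γ e := by
  classical
  induction S using Finset.induction_on with
  | empty => exact ⟨fun _ => 0, by simp⟩
  | @insert e S he ih =>
    have hTS : G.TrivialImage γ S := fun w hw =>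
      hS w ⟨hw.1, hw.2.1, fun s hs => Finset.mem_insert_of_mem (hw.2.2.1 s hs), hw.2.2.2⟩
    obtain ⟨φ, hφ⟩ := ih hTS
    set P : V → Prop := fun x => ∃ w, G.WalkFrom x (G.head e) w ∧ ∀ s ∈ w, s.1 ∈ S with hP
    have hPe : P (G.head e) := ⟨[], .nil _, by simp⟩
    have hPiff : ∀ f ∈ S, (P (G.tail f) ↔ P (G.head f)) := by
      intro f hf
      constructor
      · rintro ⟨w, hw, hm⟩
        refine ⟨(f, false) :: w, walk_cons_false hw, ?_⟩
        intro t ht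
        rcases List.mem_cons.mp ht with rfl | ht' <;> [exact hf; exact hm t ht']
      · rintro ⟨w, hw, hm⟩
        refine ⟨(f, true) :: w, walk_cons_true hw, ?_⟩
        intro t ht
        rcases List.mem_cons.mp ht with rfl | ht' <;> [exact hf; exact hm t ht']
    by_cases hPt : P (G.tail e)
    · -- derive the equation for e directly from a cycle
      obtain ⟨w, hw, hm⟩ := hPt
      obtain ⟨p, hp⟩ := exists_path hw hm
      have hrho : φ (G.head e) = φ (G.tail e) + rho γ p := walk_rho hφ hp.1 hp.2.1
      have hwc : G.WalkFrom (G.tail e) (G.tail e) (p ++ [(e, false)]) :=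
        walk_append hp.1 (walk_cons_false (.nil _))
      have hcyc : G.IsCycleIn (insert e S) (p ++ [(e, false)]) := by
        refine ⟨⟨_, hwc⟩, by simp, ?_, ?_, ?_⟩
        · intro t ht
          rcases List.mem_append.mp ht with ht' | ht'
          · exact Finset.mem_insert_of_mem (hp.2.1 t ht')
          · simp at ht'; subst ht'; exact Finset.mem_insert_self _ _
        · rw [List.map_append]
          simp only [List.map_cons, List.map_nil]
          rw [List.nodup_append]
          refine ⟨path_edges_nodup hp, by simp, ?_⟩
          intro x hx
          simp only [List.mem_singleton]
          rintro _ rfl rfl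
          obtain ⟨t, ht, ht1⟩ := List.mem_map.mp hx
          exact he (ht1 ▸ hp.2.1 t ht)
        · rw [srcs_eq hwc]
          have : (p ++ [(e, false)]).map G.stepDst = p.map G.stepDst ++ [G.tail e] := by
            simp [stepDst]
          rw [this]
          have hdl : (G.tail e :: (p.map G.stepDst ++ [G.tail e])).dropLast
              = G.tail e :: p.map G.stepDst := by
            rw [← List.cons_append, List.dropLast_concat]
          rw [hdl]
          exact hp.2.2
      have h0 := hS _ hcyc
      have hpe : rho γ p = γ e := by
        have : rho γ (p ++ [(e, false)]) = rho γ p + - γ e := by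
          simp [rho]
        rw [this] at h0
        linear_combination (norm := abel_nf) h0 -- rho p - γ e = 0
      refine ⟨φ, fun f hf => ?_⟩
      rcases Finset.mem_insert.mp hf with rfl | hf'
      · rw [hrho, hpe]
      · exact hφ f hf'
    · set c : Γ := φ (G.tail e) + γ e - φ (G.head e) with hc
      refine ⟨fun x => φ x + (if P x then c else 0), fun f hf => ?_⟩
      rcases Finset.mem_insert.mp hf with rfl | hf'
      · simp only [if_pos hPe, if_neg hPt, hc]
        abel
      · have hiff := hPiff f hf'
        have heq := hφ f hf'
        by_cases h1 : P (G.tail f)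
        · dsimp only; rw [if_pos (hiff.mp h1), if_pos h1, heq]; abel
        · dsimp only; rw [if_neg (fun h => h1 (hiff.mpr h)), if_neg h1, heq]; abel


end AuxLemmas

end Multigraph

/-- if the development is Laman-sparse, then `(G, γ)` is cone-Laman-sparse. -/
theorem development_sparse_implies_cone_laman_sparse
    {V E : Type} [Fintype V] [Fintype E] [DecidableEq V] [DecidableEq E]
    (G : Multigraph V E) (γ : E → ZMod 3)
    (hdev : (G.Development γ).Sparse 2 3 Finset.univ) :
    G.ConeLamanSparse γ := by
  classical
  intro S' hne
  -- cardinality of ZMod 3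
  have hZ3 : (Finset.univ : Finset (ZMod 3)).card = 3 := by decide
  -- vertices of the full lift
  have hverts : (G.Development γ).verts (Multigraph.lift S') = (G.verts S') ×ˢ Finset.univ := by
    ext ⟨v, z⟩
    constructor
    · intro hv
      rw [Multigraph.verts, Finset.mem_union] at hv
      rw [Finset.mem_product]
      refine ⟨?_, Finset.mem_univ _⟩
      rw [Multigraph.verts, Finset.mem_union]
      rcases hv with hv | hv <;> obtain ⟨q, hq, hq2⟩ := Finset.mem_image.mp hv <;>
        obtain ⟨hq1, -⟩ := Finset.mem_product.mp (show q ∈ S' ×ˢ Finset.univ from hq)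
      · exact Or.inl (Finset.mem_image.mpr ⟨q.1, hq1, congrArg Prod.fst hq2⟩)
      · exact Or.inr (Finset.mem_image.mpr ⟨q.1, hq1, congrArg Prod.fst hq2⟩)
    · intro hv
      obtain ⟨hv1, -⟩ := Finset.mem_product.mp hv
      rw [Multigraph.verts, Finset.mem_union] at hv1 ⊢
      rcases hv1 with hv1 | hv1 <;> obtain ⟨e, he, rfl⟩ := Finset.mem_image.mp hv1
      · exact Or.inl (Finset.mem_image.mpr
          ⟨(e, z), Finset.mem_product.mpr ⟨he, Finset.mem_univ _⟩, rfl⟩)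
      · refine Or.inr (Finset.mem_image.mpr
          ⟨(e, z - γ e), Finset.mem_product.mpr ⟨he, Finset.mem_univ _⟩, ?_⟩)
        show (G.head e, z - γ e + γ e) = (G.head e, z)
        rw [sub_add_cancel]
  have hlift_card : (Multigraph.lift S').card = 3 * S'.card := by
    rw [Multigraph.lift, Finset.card_product, hZ3, Nat.mul_comm]
  -- general bound m ≤ 2n - 1
  have hgen : (S'.card : ℤ) ≤ 2 * ((G.verts S').card : ℤ) - 1 := by
    have hlne : (Multigraph.lift S' : Finset (E × ZMod 3)).Nonempty :=
      hne.product ⟨0, Finset.mem_univ _⟩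
    have h := hdev (Multigraph.lift S') (Finset.subset_univ _) hlne
    rw [hverts, Finset.card_product, hZ3, hlift_card] at h
    push_cast at h
    omega
  refine ⟨fun hti => ?_, fun _ => hgen⟩
  -- trivial-image case: use a potential to lift S' isomorphically
  obtain ⟨φ, hφ⟩ := Multigraph.exists_potential γ S' hti
  set S'' : Finset (E × ZMod 3) := S'.image (fun e => (e, φ (G.tail e))) with hS''
  have hcard : S''.card = S'.card :=
    Finset.card_image_of_injective _ (fun a b h => by simpa using congrArg Prod.fst h)
  have hsub : (G.Development γ).verts S'' ⊆ (G.verts S').image (fun v => (v, φ v)) := by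
    intro p hp
    rw [Multigraph.verts, Finset.mem_union] at hp
    rcases hp with hp | hp <;> obtain ⟨q, hq, hq2⟩ := Finset.mem_image.mp hp <;>
      obtain ⟨e, he, rfl⟩ := Finset.mem_image.mp hq
    · refine Finset.mem_image.mpr ⟨G.tail e, ?_, hq2⟩
      exact Finset.mem_union.mpr (Or.inl (Finset.mem_image_of_mem _ he))
    · refine Finset.mem_image.mpr ⟨G.head e, ?_, ?_⟩
      · exact Finset.mem_union.mpr (Or.inr (Finset.mem_image_of_mem _ he))
      · rw [← hq2]
        show (G.head e, φ (G.head e)) = (G.head e, φ (G.tail e) + γ e)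
        rw [hφ e he]
  have hvle : ((G.Development γ).verts S'').card ≤ (G.verts S').card :=
    le_trans (Finset.card_le_card hsub) Finset.card_image_le
  have h := hdev S'' (Finset.subset_univ _) (hne.image _)
  rw [hcard] at h
  have : (((G.Development γ).verts S'').card : ℤ) ≤ ((G.verts S').card : ℤ) := by
    exact_mod_cast hvle
  omega
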